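/- arXiv:0812.4761 — 2 statements merged into one kernel-verified Lean document; each statement's English description precedes it below -/
import Mathlib

section
/- Let 𝒳 be a locally convex Hausdorff real topological vector space with topological dual 𝒳*. If f : 𝒳 → (−∞, +∞] is convex and lower semi-continuous, then for every x ∈ 𝒳 one has f(x) = sup { u(x) − f*(u) : u ∈ 𝒳* }, where f*(u) = sup { u(y) − f(y) : y ∈ 𝒳 } is the Legendre–Fenchel transform of f. -/
/-- Duality theorem: on a locally convex Hausdorff real topological vector
space `𝒳`, a convex lower semicontinuous `f : 𝒳 → (−∞, +∞]` satisfies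
`f x = sup { u x − f*(u) : u ∈ 𝒳* }` where `f*` is the Legendre–Fenchel transform. -/
theorem stmt_1 {𝒳 : Type*} [AddCommGroup 𝒳] [Module ℝ 𝒳] [TopologicalSpace 𝒳]
    [IsTopologicalAddGroup 𝒳] [ContinuousSMul ℝ 𝒳] [LocallyConvexSpace ℝ 𝒳] [T2Space 𝒳]
    (f : 𝒳 → EReal) (hne : ∀ x, f x ≠ ⊥)
    (hconv : ∀ x y : 𝒳, ∀ a b : ℝ, 0 ≤ a → 0 ≤ b → a + b = 1 →
      f (a • x + b • y) ≤ (a : EReal) * f x + (b : EReal) * f y)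
    (hlsc : LowerSemicontinuous f) (x : 𝒳) :
    f x = ⨆ u : 𝒳 →L[ℝ] ℝ, ((u x : EReal) - ⨆ y : 𝒳, ((u y : EReal) - f y)) := by
  set E : Set (𝒳 × ℝ) := {p | f p.1 ≤ (p.2 : EReal)} with hEdef
  -- epigraph is closed
  have hE_closed : IsClosed E := by
    have h1 : IsClosed {p : 𝒳 × EReal | f p.1 ≤ p.2} := hlsc.isClosed_epigraph
    have : E = (fun p : 𝒳 × ℝ => (p.1, (p.2 : EReal))) ⁻¹' {p : 𝒳 × EReal | f p.1 ≤ p.2} := rfl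
    rw [this]
    exact h1.preimage (continuous_fst.prodMk (continuous_coe_real_ereal.comp continuous_snd))
  -- epigraph is convex
  have hE_conv : Convex ℝ E := by
    rintro ⟨y, t⟩ hy ⟨z, s⟩ hz a b ha hb hab
    simp only [hEdef, Set.mem_setOf_eq] at hy hz ⊢
    have hyt : f y ≠ ⊤ := fun h => by simp [h] at hy
    have hzt : f z ≠ ⊤ := fun h => by simp [h] at hz
    have hy' : f y = ((f y).toReal : EReal) := (EReal.coe_toReal hyt (hne y)).symm
    have hz' : f z = ((f z).toReal : EReal) := (EReal.coe_toReal hzt (hne z)).symm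
    have hyr : (f y).toReal ≤ t := by rw [hy'] at hy; exact_mod_cast hy
    have hzr : (f z).toReal ≤ s := by rw [hz'] at hz; exact_mod_cast hz
    calc f (a • y + b • z) ≤ (a : EReal) * f y + (b : EReal) * f z := hconv y z a b ha hb hab
      _ = (((a * (f y).toReal + b * (f z).toReal : ℝ)) : EReal) := by
          rw [hy', hz']; norm_cast
      _ ≤ (((a * t + b * s : ℝ)) : EReal) := by
          exact_mod_cast add_le_add (mul_le_mul_of_nonneg_left hyr ha)
            (mul_le_mul_of_nonneg_left hzr hb)
  -- separation principle
  have key : ∀ (x' : 𝒳) (r : ℝ), (x', r) ∉ E →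
      ∃ (u : 𝒳 →L[ℝ] ℝ) (α c : ℝ), (∀ (y : 𝒳) (t : ℝ), f y ≤ (t : EReal) → c < u y + α * t) ∧
        u x' + α * r < c := by
    intro x' r hx'
    obtain ⟨φ, c, hφx, hφE⟩ := geometric_hahn_banach_point_closed hE_conv hE_closed hx'
    refine ⟨φ.comp (ContinuousLinearMap.inl ℝ 𝒳 ℝ), φ (0, 1), c, ?_, ?_⟩
    · intro y t hyt
      have := hφE (y, t) hyt
      have hsplit : φ (y, t) = φ (y, 0) + t * φ (0, 1) := by
        rw [show ((y, t) : 𝒳 × ℝ) = (y, 0) + t • (0, 1) by simp [Prod.ext_iff], map_add,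
          map_smul, smul_eq_mul]
      simp only [ContinuousLinearMap.comp_apply, ContinuousLinearMap.inl_apply]
      rw [hsplit] at this; linarith
    · have hsplit : φ (x', r) = φ (x', 0) + r * φ (0, 1) := by
        rw [show ((x', r) : 𝒳 × ℝ) = (x', 0) + r • (0, 1) by simp [Prod.ext_iff], map_add,
          map_smul, smul_eq_mul]
      simp only [ContinuousLinearMap.comp_apply, ContinuousLinearMap.inl_apply]
      rw [hsplit] at hφx; linarith
  
  -- pointwise bound construction from a separating functional with positive vertical component
  have mkbound : ∀ (u : 𝒳 →L[ℝ] ℝ) (α c : ℝ), 0 < α →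
      (∀ (y : 𝒳) (t : ℝ), f y ≤ (t : EReal) → c < u y + α * t) →
      ∀ y : 𝒳, (((-(α⁻¹) • u) y : ℝ) : EReal) - f y ≤ ((-(c * α⁻¹) : ℝ) : EReal) := by
    intro u α c hα hsep y
    by_cases hyt : f y = ⊤
    · rw [hyt]
      simp
    · have hy' : f y = ((f y).toReal : EReal) := (EReal.coe_toReal hyt (hne y)).symm
      set ry := (f y).toReal with hry
      have hsy := hsep y ry (le_of_eq hy')
      rw [hy']
      have hreal : (-(α⁻¹) • u) y - ry ≤ -(c * α⁻¹) := by
        have hinv : α⁻¹ * α = 1 := inv_mul_cancel₀ (ne_of_gt hα)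
        have hmul := mul_lt_mul_of_pos_left hsy (inv_pos.mpr hα)
        have h2 : α⁻¹ * (α * ry) = ry := by rw [← mul_assoc, hinv, one_mul]
        have h3 : α⁻¹ * (u y + α * ry) = α⁻¹ * u y + ry := by rw [mul_add, h2]
        rw [h3] at hmul
        simp only [ContinuousLinearMap.smul_apply, smul_eq_mul]
        nlinarith [hmul]
      calc (((-(α⁻¹) • u) y : ℝ) : EReal) - (ry : EReal)
          = (((-(α⁻¹) • u) y - ry : ℝ) : EReal) := by rw [EReal.coe_sub]
        _ ≤ ((-(c * α⁻¹) : ℝ) : EReal) := by exact_mod_cast hreal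
  refine le_antisymm ?_ ?_
  · -- hard direction: f x ≤ sup
    by_contra hcon
    push_neg at hcon
    obtain ⟨r, hr1, hr2⟩ := EReal.exists_between_coe_real hcon
    by_cases hdom : ∀ y, f y = ⊤
    · -- f is identically ⊤ : the sup is ⊤
      have hsup : ((0 : 𝒳 →L[ℝ] ℝ) x : EReal) -
          (⨆ y : 𝒳, (((0 : 𝒳 →L[ℝ] ℝ) y : EReal) - f y)) = ⊤ := by
        have hbot : (⨆ y : 𝒳, (((0 : 𝒳 →L[ℝ] ℝ) y : EReal) - f y)) = ⊥ := by
          have : ∀ y : 𝒳, (((0 : 𝒳 →L[ℝ] ℝ) y : EReal) - f y) = ⊥ := by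
            intro y; rw [hdom y]; simp
          simp only [this, iSup_const]
        rw [hbot]
        simp [EReal.coe_sub_bot]
      have : (⊤ : EReal) ≤ ⨆ u : 𝒳 →L[ℝ] ℝ, ((u x : EReal) - ⨆ y : 𝒳, ((u y : EReal) - f y)) := by
        rw [← hsup]
        exact le_iSup (fun u : 𝒳 →L[ℝ] ℝ => ((u x : EReal) - ⨆ y : 𝒳, ((u y : EReal) - f y))) 0
      exact absurd (lt_of_le_of_lt this hr1) (by simp)
    · push_neg at hdom
      obtain ⟨x₀, hx₀⟩ := hdom
      set r₀ := (f x₀).toReal with hr₀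
      have hx₀eq : f x₀ = (r₀ : EReal) := (EReal.coe_toReal hx₀ (hne x₀)).symm
      -- Step A: an affine minorant exists
      obtain ⟨v, cv, hv⟩ : ∃ (v : 𝒳 →L[ℝ] ℝ) (cv : ℝ),
          ∀ y : 𝒳, ((v y : ℝ) : EReal) - f y ≤ ((cv : ℝ) : EReal) := by
        have hnotE : (x₀, r₀ - 1) ∉ E := by
          intro hmem
          have : f x₀ ≤ ((r₀ - 1 : ℝ) : EReal) := hmem
          rw [hx₀eq] at this
          have : r₀ ≤ r₀ - 1 := by exact_mod_cast this
          linarith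
        obtain ⟨u, α, c, hsep, hlt⟩ := key x₀ (r₀ - 1) hnotE
        have hαpos : 0 < α := by
          have h1 := hsep x₀ r₀ (le_of_eq hx₀eq)
          have h2 : α * (r₀ - 1) = α * r₀ - α := by ring
          nlinarith [h1, hlt]
        exact ⟨-(α⁻¹) • u, -(c * α⁻¹), mkbound u α c hαpos hsep⟩
      -- Step B: separate (x, r) from the epigraph
      have hnotE : (x, r) ∉ E := by
        intro hmem
        exact absurd hr2 (not_lt.mpr hmem)
      obtain ⟨u, α, c, hsep, hltx⟩ := key x r hnotE
      have hα : 0 ≤ α := by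
        by_contra hαneg
        push_neg at hαneg
        set t := max r₀ ((c - u x₀) / α) with ht
        have ht1 : f x₀ ≤ (t : EReal) := by
          rw [hx₀eq]; exact_mod_cast le_max_left _ _
        have ht2 := hsep x₀ t ht1
        have ht3 : (c - u x₀) / α ≤ t := le_max_right _ _
        have hmd : α * ((c - u x₀) / α) = c - u x₀ := mul_div_cancel₀ _ (ne_of_lt hαneg)
        nlinarith [mul_le_mul_of_nonpos_left ht3 (le_of_lt hαneg)]
      rcases lt_or_eq_of_le hα with hαpos | hα0
      · -- α > 0
        set w : 𝒳 →L[ℝ] ℝ := -(α⁻¹) • u with hw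
        have hbd := mkbound u α c hαpos hsep
        have hFw : (⨆ y : 𝒳, ((w y : EReal) - f y)) ≤ ((-(c * α⁻¹) : ℝ) : EReal) :=
          iSup_le hbd
        have hgw : ((w x + c * α⁻¹ : ℝ) : EReal) ≤
            (w x : EReal) - ⨆ y : 𝒳, ((w y : EReal) - f y) := by
          have hco : ((w x + c * α⁻¹ : ℝ) : EReal) = (w x : EReal) - ((-(c * α⁻¹) : ℝ) : EReal) := by
            rw [← EReal.coe_sub]
            exact congrArg _ (by ring)
          rw [hco]
          exact EReal.sub_le_sub le_rfl hFw
        have hrw : r < w x + c * α⁻¹ := by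
          have hinv : α⁻¹ * α = 1 := inv_mul_cancel₀ (ne_of_gt hαpos)
          have hwx : w x = -(α⁻¹) * u x := by simp [hw]
          have hmul := mul_lt_mul_of_pos_left hltx (inv_pos.mpr hαpos)
          have h2 : α⁻¹ * (α * r) = r := by rw [← mul_assoc, hinv, one_mul]
          have h3 : α⁻¹ * (u x + α * r) = α⁻¹ * u x + r := by rw [mul_add, h2]
          rw [h3] at hmul
          nlinarith [hmul, hwx]
        have : (r : EReal) < ⨆ u : 𝒳 →L[ℝ] ℝ, ((u x : EReal) - ⨆ y : 𝒳, ((u y : EReal) - f y)) :=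
          lt_of_lt_of_le (lt_of_lt_of_le (by exact_mod_cast hrw) hgw)
            (le_iSup (fun u : 𝒳 →L[ℝ] ℝ => ((u x : EReal) - ⨆ y : 𝒳, ((u y : EReal) - f y))) w)
        exact absurd (lt_trans hr1 this) (lt_irrefl _)
      · -- α = 0 : vertical separation; use the affine minorant and scale
        subst hα0
        simp only [zero_mul, add_zero] at hsep hltx
        have hcu : ∀ y : 𝒳, f y ≠ ⊤ → c < u y := by
          intro y hy
          exact hsep y (f y).toReal (le_of_eq ((EReal.coe_toReal hy (hne y)).symm))
        have hcx : 0 < c - u x := by linarith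
        obtain ⟨n, hn⟩ := exists_nat_gt ((r - v x + cv) / (c - u x))
        have hn' : r - v x + cv < n * (c - u x) := by
          rw [div_lt_iff₀ hcx] at hn
          linarith
        set w : 𝒳 →L[ℝ] ℝ := v - (n : ℝ) • u with hw
        have hbd : ∀ y : 𝒳, ((w y : ℝ) : EReal) - f y ≤ ((cv - n * c : ℝ) : EReal) := by
          intro y
          by_cases hyt : f y = ⊤
          · rw [hyt]; simp
          · have hy' : f y = ((f y).toReal : EReal) := (EReal.coe_toReal hyt (hne y)).symm
            set ry := (f y).toReal with hry
            have hv' : v y - ry ≤ cv := by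
              have := hv y
              rw [hy'] at this
              rw [← EReal.coe_sub] at this
              exact_mod_cast this
            have hcu' : c < u y := hcu y hyt
            have hwr : w y - ry ≤ cv - n * c := by
              have hwy : w y = v y - n * u y := by simp [hw]
              nlinarith [mul_le_mul_of_nonneg_left (le_of_lt hcu') (Nat.cast_nonneg (α := ℝ) n)]
            rw [hy', ← EReal.coe_sub]
            exact_mod_cast hwr
        have hFw : (⨆ y : 𝒳, ((w y : EReal) - f y)) ≤ ((cv - n * c : ℝ) : EReal) := iSup_le hbd
        have hgw : ((w x - (cv - n * c) : ℝ) : EReal) ≤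
            (w x : EReal) - ⨆ y : 𝒳, ((w y : EReal) - f y) := by
          rw [EReal.coe_sub]
          exact EReal.sub_le_sub le_rfl hFw
        have hrw : r < w x - (cv - n * c) := by
          have hwx : w x = v x - n * u x := by simp [hw]
          nlinarith [hn']
        have : (r : EReal) < ⨆ u : 𝒳 →L[ℝ] ℝ, ((u x : EReal) - ⨆ y : 𝒳, ((u y : EReal) - f y)) :=
          lt_of_lt_of_le (lt_of_lt_of_le (by exact_mod_cast hrw) hgw)
            (le_iSup (fun u : 𝒳 →L[ℝ] ℝ => ((u x : EReal) - ⨆ y : 𝒳, ((u y : EReal) - f y))) w)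
        exact absurd (lt_trans hr1 this) (lt_irrefl _)
  · -- easy direction: sup ≤ f x
    apply iSup_le
    intro u
    by_cases hfx : f x = ⊤
    · rw [hfx]; exact le_top
    · have hx' : f x = ((f x).toReal : EReal) := (EReal.coe_toReal hfx (hne x)).symm
      have hF : ((u x - (f x).toReal : ℝ) : EReal) ≤ ⨆ y : 𝒳, ((u y : EReal) - f y) := by
        have := le_iSup (fun y : 𝒳 => ((u y : EReal) - f y)) x
        rw [EReal.coe_sub, ← hx']
        exact this
      calc (u x : EReal) - (⨆ y : 𝒳, ((u y : EReal) - f y))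
          ≤ (u x : EReal) - ((u x - (f x).toReal : ℝ) : EReal) := EReal.sub_le_sub le_rfl hF
        _ = (((f x).toReal : ℝ) : EReal) := by rw [← EReal.coe_sub]; norm_num
        _ = f x := hx'.symm
end

section
/- Let X be a compact metrizable space, T : X → X continuous with finite upper semi-continuous entropy map, and φ ∈ C(X). If a sequence (Ω_n) of Borel probability measures on M(X) satisfies the large deviation principle with rate function I^φ (equal to P(T,φ) − ∫φ dμ − h_μ(T) on invariant μ and +∞ otherwise), then for every ψ ∈ C(X) the limit lim_{n→∞} (1/n) log ∫_{M(X)} exp(n ∫ψ dμ) dΩ_n(μ) exists and equals P(T, φ+ψ) − P(T, φ) (a Varadhan-type necessity of the functional equality). -/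
open MeasureTheory Filter Topology
open scoped ENNReal

set_option maxHeartbeats 1000000 in
/-- (Varadhan-type necessity.) If a sequence `(Ω_n)` of Borel
probability measures on the space `M(X)` of Borel probability measures satisfies the
large deviation principle at speed `n` with rate function `I^φ` (equal to
`P(T,φ) − ∫φ dμ − h_μ(T)` on invariant `μ` and `+∞` otherwise), then for every
`ψ ∈ C(X)` the limit `(1/n) log ∫ exp(n ∫ψ dμ) dΩ_n(μ)` exists and equals
`P(T,φ+ψ) − P(T,φ)`. -/
theorem stmt_18 {X : Type*} [MetricSpace X] [CompactSpace X] [MeasurableSpace X]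
    [BorelSpace X]
    [MeasurableSpace (ProbabilityMeasure X)] [BorelSpace (ProbabilityMeasure X)]
    (T : X → X) (hT : Continuous T)
    (hent : ProbabilityMeasure X → ℝ)
    (hent_usc : UpperSemicontinuousOn hent
      {μ : ProbabilityMeasure X | (μ : Measure X).map T = (μ : Measure X)})
    (P : C(X, ℝ) → ℝ)
    (hP : ∀ χ : C(X, ℝ), IsLUB {r : ℝ | ∃ μ : ProbabilityMeasure X,
        (μ : Measure X).map T = (μ : Measure X) ∧
        r = hent μ + ∫ x, χ x ∂(μ : Measure X)} (P χ))
    (φ : C(X, ℝ))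
    (I : ProbabilityMeasure X → EReal)
    (hI1 : ∀ μ : ProbabilityMeasure X, (μ : Measure X).map T = (μ : Measure X) →
      I μ = ((P φ - ∫ x, φ x ∂(μ : Measure X) - hent μ : ℝ) : EReal))
    (hI2 : ∀ μ : ProbabilityMeasure X, ¬ (μ : Measure X).map T = (μ : Measure X) →
      I μ = ⊤)
    (Ω : ℕ → Measure (ProbabilityMeasure X)) (hΩ : ∀ n, IsProbabilityMeasure (Ω n))
    (hupper : ∀ F : Set (ProbabilityMeasure X), IsClosed F →
      Filter.limsup (fun n : ℕ => ((n : ℝ)⁻¹ : EReal) * ENNReal.log (Ω n F))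
        Filter.atTop ≤ - ⨅ μ ∈ F, I μ)
    (hlower : ∀ G : Set (ProbabilityMeasure X), IsOpen G →
      - ⨅ μ ∈ G, I μ ≤
        Filter.liminf (fun n : ℕ => ((n : ℝ)⁻¹ : EReal) * ENNReal.log (Ω n G))
          Filter.atTop) :
    ∀ ψ : C(X, ℝ),
      Filter.Tendsto
        (fun n : ℕ => (n : ℝ)⁻¹ * Real.log
          (∫ μ : ProbabilityMeasure X,
            Real.exp ((n : ℝ) * ∫ x, ψ x ∂(μ : Measure X)) ∂(Ω n)))
        Filter.atTop (𝓝 (P (φ + ψ) - P φ)) := by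
  intro ψ
  classical
  set ψb : BoundedContinuousFunction X ℝ := BoundedContinuousFunction.mkOfCompact ψ with hψb
  set Fn : ProbabilityMeasure X → ℝ := fun μ => ∫ x, ψ x ∂(μ : Measure X) with hFn
  have hFb : ∀ μ : ProbabilityMeasure X, Fn μ = ∫ x, ψb x ∂(μ : Measure X) := fun μ => rfl
  have hFcont : Continuous Fn := by
    have := MeasureTheory.ProbabilityMeasure.continuous_integral_boundedContinuousFunction
      (X := X) ψb
    exact this
  set M : ℝ := ‖ψb‖ with hMdef
  have hM0 : 0 ≤ M := norm_nonneg _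
  have hM : ∀ μ : ProbabilityMeasure X, |Fn μ| ≤ M := by
    intro μ
    have := ψb.norm_integral_le_norm (μ := (μ : Measure X))
    simpa [Real.norm_eq_abs, hFb μ] using this
  -- the integrand and the integrals
  set f : ℕ → ProbabilityMeasure X → ℝ := fun n μ => Real.exp ((n : ℝ) * Fn μ) with hf
  have hfcont : ∀ n, Continuous (f n) :=
    fun n => Real.continuous_exp.comp (continuous_const.mul hFcont)
  have hfInt : ∀ n, Integrable (f n) (Ω n) := by
    intro n
    haveI := hΩ n
    refine ⟨(hfcont n).aestronglyMeasurable, ?_⟩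
    refine HasFiniteIntegral.of_bounded (C := Real.exp ((n : ℝ) * M)) (ae_of_all _ fun μ => ?_)
    rw [Real.norm_eq_abs, abs_of_pos (Real.exp_pos _)]
    exact Real.exp_le_exp.2 (mul_le_mul_of_nonneg_left ((abs_le.1 (hM μ)).2) (Nat.cast_nonneg n))
  set In : ℕ → ℝ := fun n => ∫ μ, f n μ ∂(Ω n) with hIn
  set a : ℕ → ℝ := fun n => (n : ℝ)⁻¹ * Real.log (In n) with ha
  have hIn_lb : ∀ n : ℕ, Real.exp (-((n : ℝ) * M)) ≤ In n := by
    intro n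
    haveI := hΩ n
    have h := integral_mono (integrable_const (Real.exp (-((n : ℝ) * M)))) (hfInt n)
      (fun μ => Real.exp_le_exp.2 (by
        have := (abs_le.1 (hM μ)).1
        nlinarith [Nat.cast_nonneg (α := ℝ) n]))
    simpa [integral_const] using h
  have hIn_pos : ∀ n, 0 < In n := fun n => lt_of_lt_of_le (Real.exp_pos _) (hIn_lb n)
  have hIn_ub : ∀ n, In n ≤ Real.exp ((n : ℝ) * M) := by
    intro n
    haveI := hΩ n
    have h := integral_mono (hfInt n) (integrable_const (Real.exp ((n : ℝ) * M)))
      (fun μ => Real.exp_le_exp.2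
        (mul_le_mul_of_nonneg_left ((abs_le.1 (hM μ)).2) (Nat.cast_nonneg n)))
    simpa [integral_const] using h
  have ha_abs : ∀ n, |a n| ≤ M := by
    intro n
    rcases Nat.eq_zero_or_pos n with rfl | hn
    · simp [ha, hM0]
    · have hn0 : (0 : ℝ) < n := by exact_mod_cast hn
      have h1 : Real.log (In n) ≤ (n : ℝ) * M := by
        have := Real.log_le_log (hIn_pos n) (hIn_ub n)
        rwa [Real.log_exp] at this
      have h2 : -((n : ℝ) * M) ≤ Real.log (In n) := by
        have := Real.log_le_log (Real.exp_pos _) (hIn_lb n)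
        rwa [Real.log_exp] at this
      have hinv : (n : ℝ)⁻¹ * (n : ℝ) = 1 := inv_mul_cancel₀ hn0.ne'
      have e1 : (n : ℝ)⁻¹ * ((n : ℝ) * M) = M := by
        rw [← mul_assoc, hinv, one_mul]
      rw [abs_le]
      constructor
      · have h3 := mul_le_mul_of_nonneg_left h2 (inv_nonneg.2 hn0.le)
        rw [mul_neg, e1] at h3
        exact h3
      · have h3 := mul_le_mul_of_nonneg_left h1 (inv_nonneg.2 hn0.le)
        rw [e1] at h3
        exact h3
  have hbdd_le : Filter.IsBoundedUnder (· ≤ ·) Filter.atTop a :=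
    isBoundedUnder_of ⟨M, fun n => (abs_le.1 (ha_abs n)).2⟩
  have hbdd_ge : Filter.IsBoundedUnder (· ≥ ·) Filter.atTop a :=
    isBoundedUnder_of ⟨-M, fun n => (abs_le.1 (ha_abs n)).1⟩
  have hcob_ge : Filter.IsCoboundedUnder (· ≥ ·) Filter.atTop a :=
    hbdd_le.isCoboundedUnder_ge
  have hcob_le : Filter.IsCoboundedUnder (· ≤ ·) Filter.atTop a :=
    hbdd_ge.isCoboundedUnder_le
  set L : ℝ := P (φ + ψ) - P φ with hL
  -- integral of a sum of continuous functions
  have hint : ∀ μ : ProbabilityMeasure X,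
      ∫ x, (φ + ψ) x ∂(μ : Measure X)
        = (∫ x, φ x ∂(μ : Measure X)) + ∫ x, ψ x ∂(μ : Measure X) := by
    intro μ
    have hφ : Integrable (fun x => φ x) (μ : Measure X) := by
      exact (BoundedContinuousFunction.mkOfCompact φ).integrable (μ : Measure X)
    have hψ : Integrable (fun x => ψ x) (μ : Measure X) := by
      exact (BoundedContinuousFunction.mkOfCompact ψ).integrable (μ : Measure X)
    simp only [ContinuousMap.add_apply]
    exact integral_add hφ hψ
  -- upper bound from the variational principle
  have hub : ∀ μ : ProbabilityMeasure X, (μ : Measure X).map T = (μ : Measure X) →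
      hent μ + ((∫ x, φ x ∂(μ : Measure X)) + Fn μ) ≤ P (φ + ψ) := by
    intro μ hμ
    have hmem : hent μ + ∫ x, (φ + ψ) x ∂(μ : Measure X) ∈
        {r : ℝ | ∃ μ' : ProbabilityMeasure X,
          (μ' : Measure X).map T = (μ' : Measure X) ∧
          r = hent μ' + ∫ x, (φ + ψ) x ∂(μ' : Measure X)} := ⟨μ, hμ, rfl⟩
    have := (hP (φ + ψ)).1 hmem
    rwa [hint μ] at this
  -- Step 1: lower bound on the liminf
  have hliminf_key : ∀ ε : ℝ, 0 < ε → L - 3 * ε ≤ Filter.liminf a Filter.atTop := by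
    intro ε hε
    obtain ⟨r, hrS, hr⟩ := (lt_isLUB_iff (hP (φ + ψ))).1
      (show P (φ + ψ) - ε < P (φ + ψ) by linarith)
    obtain ⟨μ0, hμ0inv, rfl⟩ := hrS
    have hr' : P (φ + ψ) - ε < hent μ0 + ((∫ x, φ x ∂(μ0 : Measure X)) + Fn μ0) := by
      rwa [hint μ0] at hr
    set c : ℝ := Fn μ0 - ε with hc
    set G : Set (ProbabilityMeasure X) := Fn ⁻¹' Set.Ioi c with hG
    have hGopen : IsOpen G := isOpen_Ioi.preimage hFcont
    have hμ0G : μ0 ∈ G := by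
      simp only [hG, Set.mem_preimage, Set.mem_Ioi, hc]
      linarith
    set r0 : ℝ := -(P φ - (∫ x, φ x ∂(μ0 : Measure X)) - hent μ0) with hr0
    have h1 : ((r0 : ℝ) : EReal) ≤ - ⨅ μ ∈ G, I μ := by
      have hle : (⨅ μ ∈ G, I μ) ≤ I μ0 := iInf₂_le μ0 hμ0G
      have : -(I μ0) ≤ - ⨅ μ ∈ G, I μ := EReal.neg_le_neg_iff.2 hle
      rw [hI1 μ0 hμ0inv] at this
      rw [hr0, EReal.coe_neg]
      exact this
    have h2 : ((r0 : ℝ) : EReal) ≤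
        Filter.liminf (fun n : ℕ => ((n : ℝ)⁻¹ : EReal) * ENNReal.log (Ω n G))
          Filter.atTop := h1.trans (hlower G hGopen)
    have h3 : ∀ᶠ n : ℕ in Filter.atTop,
        ((r0 - ε : ℝ) : EReal) < ((n : ℝ)⁻¹ : EReal) * ENNReal.log (Ω n G) :=
      eventually_lt_of_lt_liminf
        (lt_of_lt_of_le (EReal.coe_lt_coe_iff.2 (by linarith)) h2)
    refine le_liminf_of_le hcob_ge ?_
    filter_upwards [h3, eventually_ge_atTop 1] with n hn hn1
    have hn0 : (0 : ℝ) < n := by exact_mod_cast hn1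
    haveI := hΩ n
    have hΩG0 : Ω n G ≠ 0 := by
      intro h0
      rw [h0, ENNReal.log_zero, EReal.mul_bot_of_pos (by
        rw [← EReal.coe_inv]
        exact EReal.coe_pos.2 (inv_pos.2 hn0))] at hn
      exact not_lt_bot hn
    have hΩGtop : Ω n G ≠ ⊤ := measure_ne_top _ _
    set t : ℝ := (Ω n G).toReal with htdef
    have ht : 0 < t := ENNReal.toReal_pos hΩG0 hΩGtop
    have hn' : r0 - ε < (n : ℝ)⁻¹ * Real.log t := by
      rw [ENNReal.log_pos_real hΩG0 hΩGtop, ← EReal.coe_inv, ← EReal.coe_mul] at hn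
      exact_mod_cast hn
    have hset : Real.exp ((n : ℝ) * c) * t ≤ ∫ μ in G, f n μ ∂(Ω n) := by
      have h := setIntegral_ge_of_const_le hGopen.measurableSet hΩGtop
        (fun μ hμ => Real.exp_le_exp.2
          (mul_le_mul_of_nonneg_left (le_of_lt hμ) hn0.le)) ((hfInt n).integrableOn)
      rw [smul_eq_mul, mul_comm] at h
      exact h
    have hInlb : Real.exp ((n : ℝ) * c) * t ≤ In n :=
      hset.trans (setIntegral_le_integral (hfInt n) (ae_of_all _ fun μ => (Real.exp_pos _).le))
    have hlogIn : (n : ℝ) * c + Real.log t ≤ Real.log (In n) := by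
      have := Real.log_le_log (mul_pos (Real.exp_pos _) ht) hInlb
      rwa [Real.log_mul (Real.exp_ne_zero _) ht.ne', Real.log_exp] at this
    have h4 : (n : ℝ)⁻¹ * ((n : ℝ) * c + Real.log t) ≤ a n :=
      mul_le_mul_of_nonneg_left hlogIn (inv_nonneg.2 hn0.le)
    have h5 : (n : ℝ)⁻¹ * ((n : ℝ) * c + Real.log t)
        = c + (n : ℝ)⁻¹ * Real.log t := by
      rw [mul_add, ← mul_assoc, inv_mul_cancel₀ hn0.ne', one_mul]
    rw [h5] at h4
    have h6 : c + (r0 - ε) ≤ c + (n : ℝ)⁻¹ * Real.log t := by linarith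
    have h7 : L - 3 * ε ≤ c + (r0 - ε) := by
      rw [hc, hr0, hL]
      linarith
    linarith
  have hliminf : (L : ℝ) ≤ Filter.liminf a Filter.atTop := by
    by_contra hcon
    push_neg at hcon
    have hε : 0 < (L - Filter.liminf a Filter.atTop) / 4 := by linarith
    have := hliminf_key _ hε
    linarith
  -- Step 2: upper bound on the limsup
  have hlimsup_key : ∀ ε : ℝ, 0 < ε → Filter.limsup a Filter.atTop ≤ L + 3 * ε := by
    intro ε hε
    set K : ℕ := ⌊2 * M / ε⌋₊ + 1 with hK
    have hKpos : (0 : ℝ) < K := by positivity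
    set cg : ℕ → ℝ := fun j => -M + j * ε with hcg
    set Fs : ℕ → Set (ProbabilityMeasure X) :=
      fun j => Fn ⁻¹' Set.Icc (cg j) (cg j + ε) with hFs
    have hFsclosed : ∀ j, IsClosed (Fs j) := fun j => isClosed_Icc.preimage hFcont
    have hcover : ∀ μ : ProbabilityMeasure X, ∃ j, j < K ∧ μ ∈ Fs j := by
      intro μ
      obtain ⟨hMl, hMu⟩ := abs_le.1 (hM μ)
      set t : ℝ := Fn μ + M with htdef
      have ht : 0 ≤ t := by linarith
      refine ⟨⌊t / ε⌋₊, ?_, ?_, ?_⟩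
      · have h1 : t / ε ≤ 2 * M / ε := by
          rw [div_eq_mul_inv, div_eq_mul_inv]
          exact mul_le_mul_of_nonneg_right (by linarith) (inv_nonneg.2 hε.le)
        calc ⌊t / ε⌋₊ ≤ ⌊2 * M / ε⌋₊ := Nat.floor_mono h1
          _ < K := Nat.lt_succ_self _
      · show cg ⌊t / ε⌋₊ ≤ Fn μ
        have h1 : (⌊t / ε⌋₊ : ℝ) ≤ t / ε := Nat.floor_le (div_nonneg ht hε.le)
        have h2 : (⌊t / ε⌋₊ : ℝ) * ε ≤ t := (le_div_iff₀ hε).1 h1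
        simp only [hcg]
        linarith
      · show Fn μ ≤ cg ⌊t / ε⌋₊ + ε
        have h1 : t / ε < ⌊t / ε⌋₊ + 1 := Nat.lt_floor_add_one _
        have h2 : t < ((⌊t / ε⌋₊ : ℝ) + 1) * ε := (div_lt_iff₀ hε).1 h1
        simp only [hcg]
        nlinarith
    have hbound_j : ∀ j : ℕ,
        Filter.limsup (fun n : ℕ => ((n : ℝ)⁻¹ : EReal) * ENNReal.log (Ω n (Fs j)))
          Filter.atTop ≤ ((L - cg j : ℝ) : EReal) := by
      intro j
      refine (hupper _ (hFsclosed j)).trans ?_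
      rw [EReal.neg_le, ← EReal.coe_neg]
      refine le_iInf₂ fun μ hμ => ?_
      by_cases hinv : (μ : Measure X).map T = (μ : Measure X)
      · rw [hI1 μ hinv]
        rw [EReal.coe_le_coe_iff]
        have h1 := hub μ hinv
        have h2 : cg j ≤ Fn μ := hμ.1
        rw [hL]
        linarith
      · rw [hI2 μ hinv]; exact le_top
    have hev : ∀ᶠ n : ℕ in Filter.atTop, ∀ j ∈ Finset.range K,
        ((n : ℝ)⁻¹ : EReal) * ENNReal.log (Ω n (Fs j)) < ((L - cg j + ε : ℝ) : EReal) := by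
      rw [Filter.eventually_all_finset]
      intro j _
      exact eventually_lt_of_limsup_lt
        (lt_of_le_of_lt (hbound_j j) (EReal.coe_lt_coe_iff.2 (by linarith)))
    have hsmall : ∀ᶠ n : ℕ in Filter.atTop, (n : ℝ)⁻¹ * Real.log K ≤ ε := by
      have htend : Filter.Tendsto (fun n : ℕ => (n : ℝ)⁻¹ * Real.log K)
          Filter.atTop (𝓝 0) := by
        simpa using tendsto_inv_atTop_nhds_zero_nat.mul_const (Real.log K)
      exact (htend.eventually_lt_const hε).mono fun n hn => hn.le
    refine limsup_le_of_le hcob_le ?_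
    filter_upwards [hev, hsmall, eventually_ge_atTop 1] with n hn hsm hn1
    have hn0 : (0 : ℝ) < n := by exact_mod_cast hn1
    haveI := hΩ n
    have step1 : ∀ j ∈ Finset.range K,
        (Ω n (Fs j)).toReal ≤ Real.exp ((n : ℝ) * (L - cg j + ε)) := by
      intro j hj
      specialize hn j hj
      by_cases h0 : Ω n (Fs j) = 0
      · rw [h0]; simp [Real.exp_nonneg]
      · have htop : Ω n (Fs j) ≠ ⊤ := measure_ne_top _ _
        set tj : ℝ := (Ω n (Fs j)).toReal with htj
        have htjpos : 0 < tj := ENNReal.toReal_pos h0 htop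
        have hn' : (n : ℝ)⁻¹ * Real.log tj < L - cg j + ε := by
          rw [ENNReal.log_pos_real h0 htop, ← EReal.coe_inv, ← EReal.coe_mul] at hn
          exact_mod_cast hn
        have hlog : Real.log tj < (n : ℝ) * (L - cg j + ε) := by
          have := mul_lt_mul_of_pos_left hn' hn0
          rwa [← mul_assoc, mul_inv_cancel₀ hn0.ne', one_mul] at this
        calc tj = Real.exp (Real.log tj) := (Real.exp_log htjpos).symm
          _ ≤ Real.exp ((n : ℝ) * (L - cg j + ε)) := Real.exp_le_exp.2 hlog.le
    have hintind : ∀ j : ℕ, Integrable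
        (Set.indicator (Fs j) (fun _ => Real.exp ((n : ℝ) * (cg j + ε)))) (Ω n) :=
      fun j => (integrable_const _).indicator (hFsclosed j).measurableSet
    have step2 : In n ≤ ∑ j ∈ Finset.range K,
        Real.exp ((n : ℝ) * (cg j + ε)) * (Ω n (Fs j)).toReal := by
      have hpt : ∀ μ, f n μ ≤ ∑ j ∈ Finset.range K,
          Set.indicator (Fs j) (fun _ => Real.exp ((n : ℝ) * (cg j + ε))) μ := by
        intro μ
        obtain ⟨j0, hj0K, hj0⟩ := hcover μ
        calc f n μ ≤ Set.indicator (Fs j0)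
              (fun _ => Real.exp ((n : ℝ) * (cg j0 + ε))) μ := by
              rw [Set.indicator_of_mem hj0]
              exact Real.exp_le_exp.2 (mul_le_mul_of_nonneg_left hj0.2 hn0.le)
          _ ≤ ∑ j ∈ Finset.range K,
              Set.indicator (Fs j) (fun _ => Real.exp ((n : ℝ) * (cg j + ε))) μ :=
            Finset.single_le_sum
              (f := fun j => Set.indicator (Fs j)
                (fun _ => Real.exp ((n : ℝ) * (cg j + ε))) μ)
              (fun j _ => Set.indicator_nonneg (fun _ _ => (Real.exp_pos _).le) μ)
              (Finset.mem_range.2 hj0K)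
      calc In n ≤ ∫ μ, (∑ j ∈ Finset.range K,
            Set.indicator (Fs j) (fun _ => Real.exp ((n : ℝ) * (cg j + ε))) μ) ∂(Ω n) :=
          integral_mono (hfInt n) (integrable_finset_sum _ fun j _ => hintind j) hpt
        _ = ∑ j ∈ Finset.range K, ∫ μ,
            Set.indicator (Fs j) (fun _ => Real.exp ((n : ℝ) * (cg j + ε))) μ ∂(Ω n) :=
          integral_finset_sum _ (fun j _ => hintind j)
        _ = ∑ j ∈ Finset.range K,
            Real.exp ((n : ℝ) * (cg j + ε)) * (Ω n (Fs j)).toReal := by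
          refine Finset.sum_congr rfl fun j _ => ?_
          rw [integral_indicator_const _ (hFsclosed j).measurableSet, smul_eq_mul, mul_comm]
          rfl
    have step3 : In n ≤ (K : ℝ) * Real.exp ((n : ℝ) * (L + 2 * ε)) := by
      calc In n ≤ ∑ j ∈ Finset.range K,
            Real.exp ((n : ℝ) * (cg j + ε)) * Real.exp ((n : ℝ) * (L - cg j + ε)) :=
          step2.trans (Finset.sum_le_sum fun j hj =>
            mul_le_mul_of_nonneg_left (step1 j hj) (Real.exp_pos _).le)
        _ = ∑ _j ∈ Finset.range K, Real.exp ((n : ℝ) * (L + 2 * ε)) := by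
          refine Finset.sum_congr rfl fun j _ => ?_
          rw [← Real.exp_add]
          ring_nf
        _ = (K : ℝ) * Real.exp ((n : ℝ) * (L + 2 * ε)) := by
          rw [Finset.sum_const, Finset.card_range, nsmul_eq_mul]
    have hlogIn : Real.log (In n) ≤ Real.log K + (n : ℝ) * (L + 2 * ε) := by
      have := Real.log_le_log (hIn_pos n) step3
      rwa [Real.log_mul hKpos.ne' (Real.exp_ne_zero _), Real.log_exp] at this
    have h4 : a n ≤ (n : ℝ)⁻¹ * (Real.log K + (n : ℝ) * (L + 2 * ε)) :=
      mul_le_mul_of_nonneg_left hlogIn (inv_nonneg.2 hn0.le)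
    have h5 : (n : ℝ)⁻¹ * (Real.log K + (n : ℝ) * (L + 2 * ε))
        = (n : ℝ)⁻¹ * Real.log K + (L + 2 * ε) := by
      rw [mul_add, ← mul_assoc, inv_mul_cancel₀ hn0.ne', one_mul]
    rw [h5] at h4
    linarith
  have hlimsup : Filter.limsup a Filter.atTop ≤ L := by
    by_contra hcon
    push_neg at hcon
    have hε : 0 < (Filter.limsup a Filter.atTop - L) / 4 := by linarith
    have := hlimsup_key _ hε
    linarith
  exact tendsto_of_le_liminf_of_limsup_le hliminf hlimsup hbdd_le hbdd_ge
end
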